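/- Let G_n be the straight linear 2-tree on n vertices. The resistance distance between vertices 1 and n satisfies r(1,n) = (n−1)/5 + 4F_{n-1}/(5L_{n-1}), where F_k and L_k are the k-th Fibonacci and Lucas numbers. -/

import Mathlib

/-- Adjacency of the linear k-tree band graph: `a ~ b` iff `1 ≤ |a - b| ≤ k`.
For `k = 2` this is the straight linear 2-tree. -/
def linAdj (k a b : ℕ) : Bool := decide (a ≠ b ∧ a ≤ b + k ∧ b ≤ a + k)

/-- Graph Laplacian of the graph on `n` vertices with adjacency `adj`. -/
def lapl (n : ℕ) (adj : ℕ → ℕ → Bool) : Matrix (Fin n) (Fin n) ℚ :=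
  fun i j =>
    if i = j then ((Finset.univ.filter (fun l : Fin n => adj i.val l.val = true)).card : ℚ)
    else if adj i.val j.val then -1 else 0

/-- Delete the first and last row and column. -/
def delFirstLast {n : ℕ} (M : Matrix (Fin n) (Fin n) ℚ) :
    Matrix (Fin (n - 2)) (Fin (n - 2)) ℚ :=
  M.submatrix (fun i => ⟨i.val + 1, by have := i.isLt; omega⟩)
    (fun j => ⟨j.val + 1, by have := j.isLt; omega⟩)

/-- Delete the first row and column. -/
def delFirst {n : ℕ} (M : Matrix (Fin n) (Fin n) ℚ) :
    Matrix (Fin (n - 1)) (Fin (n - 1)) ℚ :=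
  M.submatrix (fun i => ⟨i.val + 1, by have := i.isLt; omega⟩)
    (fun j => ⟨j.val + 1, by have := j.isLt; omega⟩)

/-- Lucas numbers: `L_0 = 2, L_1 = 1, L_2 = 3, …`. -/
def lucas : ℕ → ℚ
  | 0 => 2
  | 1 => 1
  | n + 2 => lucas (n + 1) + lucas n

def gp : ℕ → ℚ × ℚ
  | 0 => (0, 2)
  | k + 1 => ((3 * (gp k).1 + (gp k).2) / 2, (5 * (gp k).1 + 3 * (gp k).2) / 2)

def ff (k : ℕ) : ℚ := (gp k).1
def ll (k : ℕ) : ℚ := (gp k).2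
def sg (k : ℕ) : ℚ := (-1) ^ k

lemma ff_succ (k : ℕ) : ff (k+1) = (3 * ff k + ll k) / 2 := rfl
lemma ll_succ (k : ℕ) : ll (k+1) = (5 * ff k + 3 * ll k) / 2 := rfl
lemma sg_succ (k : ℕ) : sg (k+1) = - sg k := by simp [sg, pow_succ]

lemma hFL (k : ℕ) : ll k ^ 2 = 5 * ff k ^ 2 + 4 := by
  induction k with
  | zero => norm_num [ff, ll, gp]
  | succ k ih => rw [ff_succ, ll_succ]; ring_nf; ring_nf at ih; linarith

lemma hS (k : ℕ) : sg k ^ 2 = 1 := by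
  unfold sg
  rw [← pow_mul, mul_comm k 2, pow_mul]
  norm_num

lemma ff_nonneg_ll_ge (k : ℕ) : 0 ≤ ff k ∧ 2 ≤ ll k := by
  induction k with
  | zero => norm_num [ff, ll, gp]
  | succ k ih => rw [ff_succ, ll_succ]; constructor <;> linarith [ih.1, ih.2]

lemma sg_cases (k : ℕ) : sg k = 1 ∨ sg k = -1 := by
  induction k with
  | zero => left; rfl
  | succ k ih => rw [sg_succ]; rcases ih with h | h <;> simp [h]

def aa (k : ℕ) : ℚ := (2*k/5 + 9/10) * ff k + (k/5 + 21/50) * ll k + 4/25 * sg k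
def bb (k : ℕ) : ℚ := (-(7*k)/10 - 11/10) * ff k + (-(3*k)/10 - 23/50) * ll k - 2/25 * sg k
def cc (k : ℕ) : ℚ := (3*k/2 + 17/5) * ff k + (7*k/10 + 8/5) * ll k + 4/5 * sg k

lemma aa_pos (k : ℕ) : 0 < aa k := by
  obtain ⟨h1, h2⟩ := ff_nonneg_ll_ge k
  have h3 : (-1 : ℚ) ≤ sg k := by rcases sg_cases k with h | h <;> rw [h] <;> norm_num
  have hk : (0:ℚ) ≤ (k:ℚ) := Nat.cast_nonneg k
  unfold aa
  nlinarith

lemma bb_succ (k : ℕ) : bb (k+1) = bb k - aa (k+1) := by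
  unfold bb aa
  rw [ff_succ, ll_succ, sg_succ]
  push_cast
  ring

lemma cc_succ (k : ℕ) : cc (k+1) = 4 * aa (k+1) - aa k := by
  unfold cc aa
  rw [ff_succ, ll_succ, sg_succ]
  push_cast
  ring

lemma Qid (k : ℕ) : aa (k+2) * aa k = aa (k+1) * cc k - bb k ^ 2 := by
  unfold aa bb cc
  rw [show k+2 = k+1+1 from rfl, ff_succ (k+1), ll_succ (k+1), sg_succ (k+1),
    ff_succ, ll_succ, sg_succ]
  push_cast
  linear_combination (-(1:ℚ)/25) * hFL k + (4/25) * hS k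

def ent (m : ℕ) (x y z p q : ℚ) (i j : ℕ) : ℚ :=
  if i = j then
    (if i = 0 then x else if i = 1 then z else if i = m - 1 then q
     else if i = m - 2 then p else 4)
  else if (i = 0 ∧ j = 1) ∨ (i = 1 ∧ j = 0) then y
  else if i ≤ j + 2 ∧ j ≤ i + 2 then -1 else 0

def bandM (m : ℕ) (x y z p q : ℚ) : Matrix (Fin m) (Fin m) ℚ :=
  Matrix.of fun i j => ent m x y z p q i.val j.val

variable {m : ℕ} {x y z p q : ℚ}

lemma ent_00 : ent m x y z p q 0 0 = x := by simp [ent]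
lemma ent_11 : ent m x y z p q 1 1 = z := by simp [ent]
lemma ent_01 : ent m x y z p q 0 1 = y := by simp [ent]
lemma ent_10 : ent m x y z p q 1 0 = y := by simp [ent]
lemma ent_far {i j : ℕ} (h : j + 3 ≤ i ∨ i + 3 ≤ j) : ent m x y z p q i j = 0 := by
  unfold ent; split_ifs <;> first | rfl | omega
lemma ent_band {i j : ℕ} (hne : i ≠ j) (h1 : i ≤ j + 2) (h2 : j ≤ i + 2)
    (hc : ¬((i = 0 ∧ j = 1) ∨ (i = 1 ∧ j = 0))) : ent m x y z p q i j = -1 := by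
  unfold ent; split_ifs <;> first | rfl | omega
lemma ent_q {i : ℕ} (h : i = m - 1) (h2 : 2 ≤ i) : ent m x y z p q i i = q := by
  unfold ent; split_ifs <;> first | rfl | omega
lemma ent_p {i : ℕ} (h : i = m - 2) (h2 : 2 ≤ i) (h3 : i ≠ m - 1) :
    ent m x y z p q i i = p := by
  unfold ent; split_ifs <;> first | rfl | omega
lemma ent_4 {i : ℕ} (h2 : 2 ≤ i) (h3 : i ≠ m - 1) (h4 : i ≠ m - 2) :
    ent m x y z p q i i = 4 := by
  unfold ent; split_ifs <;> first | rfl | omega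

def sumEquiv (m : ℕ) : Fin 1 ⊕ Fin m ≃ Fin (m + 1) :=
  finSumFinEquiv.trans (finCongr (Nat.add_comm 1 m))

lemma schur (hm : 4 ≤ m) (hx : x ≠ 0) :
    (bandM (m+1) x y z p q).det =
      x * (bandM m (z - y^2/x) (-1 + y/x) (4 - 1/x) p q).det := by
  have hval : ∀ i : Fin m, ((sumEquiv m (Sum.inr i)) : ℕ) = 1 + i.val := by
    intro i; simp [sumEquiv]; omega
  have hval0 : ∀ i : Fin 1, ((sumEquiv m (Sum.inl i)) : ℕ) = 0 := by
    intro i; simp [sumEquiv, Fin.fin_one_eq_zero i]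
  have hblocks : (bandM (m+1) x y z p q).submatrix (sumEquiv m) (sumEquiv m) =
      Matrix.fromBlocks !![x]
        (Matrix.of fun (_ : Fin 1) (j : Fin m) => ent (m+1) x y z p q 0 (1 + j.val))
        (Matrix.of fun (i : Fin m) (_ : Fin 1) => ent (m+1) x y z p q (1 + i.val) 0)
        (Matrix.of fun (i j : Fin m) => ent (m+1) x y z p q (1 + i.val) (1 + j.val)) := by
    ext (i | i) (j | j) <;>
      simp only [Matrix.submatrix_apply, Matrix.fromBlocks_apply₁₁,
        Matrix.fromBlocks_apply₁₂, Matrix.fromBlocks_apply₂₁, Matrix.fromBlocks_apply₂₂,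
        bandM, Matrix.of_apply, hval, hval0, Fin.fin_one_eq_zero] <;>
      first
        | rfl
        | simp [ent_00]
  haveI : Invertible (!![x] : Matrix (Fin 1) (Fin 1) ℚ) :=
    ⟨!![x⁻¹],
      (by
        ext i j
        fin_cases i
        fin_cases j
        simp [Matrix.mul_apply, inv_mul_cancel₀ hx]),
      (by
        ext i j
        fin_cases i
        fin_cases j
        simp [Matrix.mul_apply, mul_inv_cancel₀ hx])⟩
  rw [← Matrix.det_submatrix_equiv_self (sumEquiv m) (bandM (m+1) x y z p q), hblocks,
    Matrix.det_fromBlocks₁₁]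
  have hinv : (⅟(!![x] : Matrix (Fin 1) (Fin 1) ℚ)) = !![x⁻¹] := by
    apply invOf_eq_right_inv
    ext i j
    fin_cases i
    fin_cases j
    simp [Matrix.mul_apply, mul_inv_cancel₀ hx]
  have hdet1 : (!![x] : Matrix (Fin 1) (Fin 1) ℚ).det = x := Matrix.det_fin_one_of x
  rw [hinv, hdet1]
  congr 2
  ext i j
  rcases i with ⟨i', him⟩
  rcases j with ⟨j', hjm⟩
  simp only [Matrix.sub_apply, Matrix.mul_apply, Fin.sum_univ_one, Matrix.of_apply, bandM,
    Matrix.cons_val', Matrix.cons_val_zero, Matrix.empty_val', Matrix.cons_val_fin_one]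
  show ent (m+1) x y z p q (1+i') (1+j') -
      ent (m+1) x y z p q (1+i') 0 * x⁻¹ * ent (m+1) x y z p q 0 (1+j') =
      ent m (z - y^2/x) (-1 + y/x) (4 - 1/x) p q i' j'
  symm
  by_cases hij : i' = j'
  · subst hij
    rcases Nat.lt_or_ge i' 2 with hi | hi
    · interval_cases i'
      · rw [ent_00, ent_11 (m := m+1), ent_10 (m := m+1), ent_01 (m := m+1)]
        field_simp
      · rw [ent_11, ent_4 (m := m+1) (by omega) (by omega) (by omega),
          ent_band (m := m+1) (by omega) (by omega) (by omega) (by omega),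
          ent_band (m := m+1) (by omega) (by omega) (by omega) (by omega)]
        field_simp
    · have hc1 : ent (m+1) x y z p q (1+i') 0 = 0 := ent_far (by omega)
      rw [hc1, zero_mul, zero_mul, sub_zero]
      by_cases hq : i' = m - 1
      · rw [ent_q hq hi, ent_q (m := m+1) (by omega) (by omega)]
      · by_cases hp : i' = m - 2
        · rw [ent_p hp hi hq, ent_p (m := m+1) (by omega) (by omega) (by omega)]
        · rw [ent_4 hi hq hp, ent_4 (m := m+1) (by omega) (by omega) (by omega)]
  · -- off-diagonal
    by_cases hcor : (i' = 0 ∧ j' = 1) ∨ (i' = 1 ∧ j' = 0)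
    · rcases hcor with ⟨h1, h2⟩ | ⟨h1, h2⟩ <;> subst h1 <;> subst h2
      · rw [ent_01, ent_band (m := m+1) (i := 1) (j := 2) (by omega) (by omega) (by omega)
            (by omega),
          ent_10 (m := m+1),
          ent_band (m := m+1) (i := 0) (j := 2) (by omega) (by omega) (by omega) (by omega)]
        field_simp
        ring
      · rw [ent_10, ent_band (m := m+1) (i := 2) (j := 1) (by omega) (by omega) (by omega)
            (by omega),
          ent_band (m := m+1) (i := 2) (j := 0) (by omega) (by omega) (by omega) (by omega),
          ent_01 (m := m+1)]
        field_simp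
        ring
    · have hz : ent (m+1) x y z p q (1+i') 0 * x⁻¹ * ent (m+1) x y z p q 0 (1+j') = 0 := by
        rcases Nat.lt_or_ge i' 2 with hi | hi
        · have hj2 : 2 ≤ j' := by omega
          rw [ent_far (m := m+1) (i := 0) (j := 1+j') (by omega)]
          ring
        · rw [ent_far (m := m+1) (i := 1+i') (j := 0) (by omega)]
          ring
      rw [hz, sub_zero]
      by_cases hband : i' ≤ j' + 2 ∧ j' ≤ i' + 2
      · rw [ent_band hij hband.1 hband.2 hcor,
          ent_band (m := m+1) (by omega) (by omega) (by omega) (by omega)]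
      · rw [ent_far (by omega), ent_far (m := m+1) (by omega)]

lemma band4 (x y z p q : ℚ) : bandM 4 x y z p q =
    !![x, y, -1, 0; y, z, -1, -1; -1, -1, p, -1; 0, -1, -1, q] := by
  ext i j
  fin_cases i <;> fin_cases j <;>
    simp [bandM, ent, show ((0:Fin 4):ℕ) = 0 from rfl, show ((1:Fin 4):ℕ) = 1 from rfl,
      show ((2:Fin 4):ℕ) = 2 from rfl, show ((3:Fin 4):ℕ) = 3 from rfl,
      Matrix.cons_val_one, Matrix.vecHead, Matrix.vecTail, Matrix.cons_val_zero] <;> norm_num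

lemma det4 (x y z p q : ℚ) : (bandM 4 x y z p q).det =
    x*z*p*q - x*z - x*p - x*q - 2*x - y^2*p*q + y^2 + 2*y*q + 2*y - z*q + 1 := by
  rw [band4]
  simp [Matrix.det_succ_row_zero, Fin.sum_univ_succ, Fin.succAbove]
  ring

lemma aa_ne (k : ℕ) : aa k ≠ 0 := (aa_pos k).ne'

lemma lin1 (k : ℕ) : 5 * aa (k+2) - 7 * aa (k+1) + 6 * bb k - 2 * cc k + aa k = ff (k+4) := by
  unfold aa bb cc
  simp only [show k+4 = k+3+1 from rfl, show k+3 = k+2+1 from rfl, show k+2 = k+1+1 from rfl,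
    ff_succ, ll_succ, sg_succ]
  push_cast
  ring

lemma lin2 (k : ℕ) : 11 * aa (k+2) - 9 * aa (k+1) + 8 * bb k - 3 * cc k + aa k =
    (((k:ℚ)+5) * ff (k+5) + (4/5) * ll (k+5) - (8/5) * sg (k+5)) / 5 := by
  unfold aa bb cc
  simp only [show k+5 = k+4+1 from rfl, show k+4 = k+3+1 from rfl, show k+3 = k+2+1 from rfl,
    show k+2 = k+1+1 from rfl, ff_succ, ll_succ, sg_succ]
  push_cast
  ring

lemma a2_div (k : ℕ) : aa (k+2) = (aa (k+1) * cc k - bb k ^ 2) / aa k := by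
  rw [eq_div_iff (aa_ne k)]
  exact Qid k

lemma key4 (k : ℕ) (p q : ℚ) :
    aa k * (bandM 4 (aa (k+1)/aa k) (bb k/aa k) (cc k/aa k) p q).det =
      (p*q-1) * aa (k+2) + (-p-q-2) * aa (k+1) + (2*q+2) * bb k + (-q) * cc k + aa k := by
  rw [det4, a2_div]
  have h0 := aa_ne k
  field_simp
  ring

lemma mainInd (p q : ℚ) (T : ℕ → ℚ)
    (hbase : ∀ k, aa k * (bandM 4 (aa (k+1)/aa k) (bb k/aa k) (cc k/aa k) p q).det = T (4+k)) :
    ∀ m, 4 ≤ m → ∀ k,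
      aa k * (bandM m (aa (k+1)/aa k) (bb k/aa k) (cc k/aa k) p q).det = T (m+k) := by
  intro m hm
  induction m, hm using Nat.le_induction with
  | base => exact hbase
  | succ m hm ih =>
    intro k
    have h0 := aa_ne k
    have h1 := aa_ne (k+1)
    rw [schur hm (div_ne_zero h1 h0)]
    have e1 : cc k / aa k - (bb k/aa k)^2/(aa (k+1)/aa k) = aa (k+2)/aa (k+1) := by
      rw [a2_div]
      field_simp
    have e2 : -1 + (bb k/aa k)/(aa (k+1)/aa k) = bb (k+1)/aa (k+1) := by
      rw [bb_succ]; field_simp; ring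
    have e3 : 4 - 1/(aa (k+1)/aa k) = cc (k+1)/aa (k+1) := by
      rw [cc_succ]; field_simp
    rw [e1, e2, e3, ← mul_assoc, mul_div_cancel₀ _ h0, ih (k+1),
      show m + (k+1) = m+1+k by omega]

lemma detV1 (m : ℕ) (hm : 4 ≤ m) : (bandM m 3 (-1) 4 3 2).det = ff m := by
  have h := mainInd 3 2 ff (fun k => by rw [key4, show 4+k = k+4 by omega, ← lin1 k]; ring) m hm 0
  have ha0 : aa 0 = 1 := by norm_num [aa, ff, ll, sg, gp]
  have ha1 : aa 1 = 3 := by norm_num [aa, ff, ll, sg, gp]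
  have hb0 : bb 0 = -1 := by norm_num [bb, ff, ll, sg, gp]
  have hc0 : cc 0 = 4 := by norm_num [cc, ff, ll, sg, gp]
  rw [ha0, ha1, hb0, hc0] at h
  norm_num at h
  rw [← h]

def T2 (s : ℕ) : ℚ := (((s:ℚ)+1) * ff (s+1) + (4/5) * ll (s+1) - (8/5) * sg (s+1)) / 5

lemma detV2 (m : ℕ) (hm : 4 ≤ m) : (bandM m 3 (-1) 4 4 3).det = T2 m := by
  have h := mainInd 4 3 T2 (fun k => by
    rw [key4, show 4+k = k+4 by omega]
    unfold T2
    push_cast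
    rw [show (k:ℚ)+4+1 = (k:ℚ)+5 by ring, show k+4+1 = k+5 from rfl, ← lin2 k]
    ring) m hm 0
  have ha0 : aa 0 = 1 := by norm_num [aa, ff, ll, sg, gp]
  have ha1 : aa 1 = 3 := by norm_num [aa, ff, ll, sg, gp]
  have hb0 : bb 0 = -1 := by norm_num [bb, ff, ll, sg, gp]
  have hc0 : cc 0 = 4 := by norm_num [cc, ff, ll, sg, gp]
  rw [ha0, ha1, hb0, hc0] at h
  norm_num at h
  rw [← h]

lemma lucas_add_two (n : ℕ) : lucas (n+2) = lucas (n+1) + lucas n := rfl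

lemma fibcast (t : ℕ) : (Nat.fib (t+2) : ℚ) = (Nat.fib (t+1) : ℚ) + (Nat.fib t : ℚ) := by
  rw [Nat.fib_add_two]
  push_cast
  ring

lemma fibLucasStep : ∀ j : ℕ, (Nat.fib (j+1) : ℚ) = ((Nat.fib j : ℚ) + lucas j) / 2 ∧
    lucas (j+1) = (5 * (Nat.fib j : ℚ) + lucas j) / 2 := by
  have key : ∀ j : ℕ,
      ((Nat.fib (j+1) : ℚ) = ((Nat.fib j : ℚ) + lucas j) / 2 ∧
        lucas (j+1) = (5 * (Nat.fib j : ℚ) + lucas j) / 2) ∧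
      ((Nat.fib (j+2) : ℚ) = ((Nat.fib (j+1) : ℚ) + lucas (j+1)) / 2 ∧
        lucas (j+2) = (5 * (Nat.fib (j+1) : ℚ) + lucas (j+1)) / 2) := by
    intro j
    induction j with
    | zero => norm_num [lucas, Nat.fib]
    | succ j ih =>
      refine ⟨ih.2, ?_, ?_⟩
      · linear_combination (fibcast (j+1)) + (1/2 : ℚ) * ih.2.1 - (1/2 : ℚ) * ih.2.2
      · linear_combination (lucas_add_two (j+1)) - (5/2 : ℚ) * ih.2.1 + (1/2 : ℚ) * ih.2.2
  exact fun j => (key j).1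

lemma identFL (j : ℕ) : lucas j ^ 2 - 5 * (Nat.fib j : ℚ) ^ 2 = 4 * (-1) ^ j := by
  induction j with
  | zero => norm_num [lucas]
  | succ j ih =>
    obtain ⟨h1, h2⟩ := fibLucasStep j
    rw [h1, h2, pow_succ]
    ring_nf
    ring_nf at ih
    linarith

lemma bridge (j : ℕ) : ff j = (Nat.fib j : ℚ) * lucas j ∧ ll j = lucas j ^ 2 - 2 * sg j := by
  induction j with
  | zero => norm_num [ff, ll, sg, gp, lucas]
  | succ j ih =>
    obtain ⟨h1, h2⟩ := fibLucasStep j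
    obtain ⟨e1, e2⟩ := ih
    constructor
    · rw [ff_succ, h1, h2, e1, e2]
      simp only [sg]
      linear_combination (1/4 : ℚ) * identFL j
    · rw [ll_succ, h2, e1, e2, sg_succ]
      simp only [sg]
      linear_combination (5/4 : ℚ) * identFL j
  
lemma lucas_pos (j : ℕ) : 0 < lucas j := by
  have key : ∀ j : ℕ, 0 < lucas j ∧ 0 < lucas (j+1) := by
    intro j
    induction j with
    | zero => norm_num [lucas]
    | succ j ih => exact ⟨ih.2, by rw [lucas_add_two]; linarith [ih.1, ih.2]⟩
  exact (key j).1

lemma card_deg (n v : ℕ) :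
    (Finset.univ.filter (fun l : Fin n => linAdj 2 v l.val = true)).card =
      ((Finset.range n).filter (fun l => linAdj 2 v l = true)).card := by
  rw [Finset.card_filter, Finset.card_filter]
  exact Fin.sum_univ_eq_sum_range (fun l => if linAdj 2 v l = true then 1 else 0) n

lemma deg_val (n v : ℕ) (hn : 6 ≤ n) (hv : 1 ≤ v) (hv2 : v < n) :
    ((Finset.range n).filter (fun l => linAdj 2 v l = true)).card =
      if v = n - 1 then 2 else if v = 1 ∨ v = n - 2 then 3 else 4 := by
  have hmem : ∀ l, (linAdj 2 v l = true) ↔ (l ≠ v ∧ l ≤ v + 2 ∧ v ≤ l + 2) := by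
    intro l
    simp [linAdj]
    omega
  by_cases h1 : v = n - 1
  · have hset : ((Finset.range n).filter (fun l => linAdj 2 v l = true)) = {v-2, v-1} := by
      ext l
      simp [Finset.mem_filter, Finset.mem_range, Finset.mem_insert, hmem, linAdj]
      omega
    rw [hset, if_pos h1]
    rw [Finset.card_insert_of_notMem (by simp only [Finset.mem_insert, Finset.mem_singleton]; omega), Finset.card_singleton]
  · by_cases h2 : v = 1
    · have hset : ((Finset.range n).filter (fun l => linAdj 2 v l = true)) = {0, 2, 3} := by
        ext l
        simp [Finset.mem_filter, Finset.mem_range, Finset.mem_insert, hmem, linAdj]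
        omega
      rw [hset, if_neg h1, if_pos (Or.inl h2)]
      rw [Finset.card_insert_of_notMem (by simp only [Finset.mem_insert, Finset.mem_singleton]; omega),
        Finset.card_insert_of_notMem (by simp only [Finset.mem_singleton]; omega),
        Finset.card_singleton]
    · by_cases h3 : v = n - 2
      · have hset : ((Finset.range n).filter (fun l => linAdj 2 v l = true))
            = {v-2, v-1, v+1} := by
          ext l
          simp [Finset.mem_filter, Finset.mem_range, Finset.mem_insert, hmem, linAdj]
          omega
        rw [hset, if_neg h1, if_pos (Or.inr h3)]
        rw [Finset.card_insert_of_notMem (by simp only [Finset.mem_insert, Finset.mem_singleton]; omega),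
          Finset.card_insert_of_notMem (by simp only [Finset.mem_insert, Finset.mem_singleton]; omega), Finset.card_singleton]
      · have hset : ((Finset.range n).filter (fun l => linAdj 2 v l = true))
            = {v-2, v-1, v+1, v+2} := by
          ext l
          simp [Finset.mem_filter, Finset.mem_range, Finset.mem_insert, hmem, linAdj]
          omega
        rw [hset, if_neg h1, if_neg (by push_neg; exact ⟨h2, h3⟩)]
        rw [Finset.card_insert_of_notMem (by simp only [Finset.mem_insert, Finset.mem_singleton]; omega),
          Finset.card_insert_of_notMem (by simp only [Finset.mem_insert, Finset.mem_singleton]; omega),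
          Finset.card_insert_of_notMem (by simp only [Finset.mem_insert, Finset.mem_singleton]; omega), Finset.card_singleton]

lemma lapl_offdiag (n : ℕ) (i j : Fin n) (hij : i ≠ j) :
    lapl n (linAdj 2) i j = if linAdj 2 i.val j.val then -1 else 0 := by
  rw [lapl, if_neg hij]

lemma lapl_diag (n : ℕ) (i : Fin n) (hn : 6 ≤ n) (hv : 1 ≤ i.val) :
    lapl n (linAdj 2) i i =
      if i.val = n - 1 then 2 else if i.val = 1 ∨ i.val = n - 2 then 3 else 4 := by
  rw [lapl, if_pos rfl, card_deg, deg_val n i.val hn hv i.isLt]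
  split_ifs <;> norm_num

lemma delFirst_eq (n : ℕ) (hn : 6 ≤ n) :
    delFirst (lapl n (linAdj 2)) = bandM (n-1) 3 (-1) 4 3 2 := by
  ext ⟨i, hi⟩ ⟨j, hj⟩
  show lapl n (linAdj 2) ⟨i+1, by omega⟩ ⟨j+1, by omega⟩ = ent (n-1) 3 (-1) 4 3 2 i j
  by_cases hij : i = j
  · subst hij
    rw [lapl_diag n _ hn (by simp)]
    unfold ent
    simp only [Fin.val_mk]
    split_ifs <;> first | rfl | omega | norm_num | (exfalso; omega)
  · rw [lapl_offdiag n _ _ (by simp [Fin.mk.injEq]; omega)]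
    unfold ent
    simp only [linAdj, Fin.val_mk, decide_eq_true_eq]
    split_ifs <;> first | rfl | omega | norm_num | (exfalso; omega)

lemma delFirstLast_eq (n : ℕ) (hn : 6 ≤ n) :
    delFirstLast (lapl n (linAdj 2)) = bandM (n-2) 3 (-1) 4 4 3 := by
  ext ⟨i, hi⟩ ⟨j, hj⟩
  show lapl n (linAdj 2) ⟨i+1, by omega⟩ ⟨j+1, by omega⟩ = ent (n-2) 3 (-1) 4 4 3 i j
  by_cases hij : i = j
  · subst hij
    rw [lapl_diag n _ hn (by simp)]
    unfold ent
    simp only [Fin.val_mk]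
    split_ifs <;> first | rfl | omega | norm_num | (exfalso; omega)
  · rw [lapl_offdiag n _ _ (by simp [Fin.mk.injEq]; omega)]
    unfold ent
    simp only [linAdj, Fin.val_mk, decide_eq_true_eq]
    split_ifs <;> first | rfl | omega | norm_num | (exfalso; omega)

/-- For the straight linear 2-tree on `n` vertices, the resistance distance
between vertices `1` and `n`, `r(1,n) = det(L({1,n}|{1,n}))/det(L(1|1))`,
equals `(n-1)/5 + 4F_{n-1}/(5L_{n-1})`. -/
theorem stmt7 (n : ℕ) (hn : 3 ≤ n) :
    (delFirstLast (lapl n (linAdj 2))).det / (delFirst (lapl n (linAdj 2))).det =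
      ((n : ℚ) - 1) / 5 + 4 * (Nat.fib (n - 1) : ℚ) / (5 * lucas (n - 1)) := by
  rcases Nat.lt_or_ge n 6 with hsmall | hbig
  · interval_cases n
    · -- n = 3
      have hB : delFirstLast (lapl 3 (linAdj 2)) = !![2] := by
        ext i j; fin_cases i; fin_cases j; decide
      have hA : delFirst (lapl 3 (linAdj 2)) = !![2, -1; -1, 2] := by
        ext i j; fin_cases i <;> fin_cases j <;> decide
      rw [hA, hB]
      rw [Matrix.det_fin_one, Matrix.det_fin_two]
      norm_num [show lucas 2 = 3 by norm_num [lucas], show Nat.fib 2 = 1 from rfl]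
    · -- n = 4
      have hB : delFirstLast (lapl 4 (linAdj 2)) = !![3, -1; -1, 3] := by
        ext i j; fin_cases i <;> fin_cases j <;> decide
      have hA : delFirst (lapl 4 (linAdj 2)) = !![3,-1,-1; -1,3,-1; -1,-1,2] := by
        ext i j; fin_cases i <;> fin_cases j <;> decide
      rw [hA, hB]
      rw [Matrix.det_fin_two, Matrix.det_fin_three]
      norm_num [show lucas 3 = 4 by norm_num [lucas], show Nat.fib 3 = 2 from rfl,
        Matrix.cons_val_zero, Matrix.cons_val_one, Matrix.head_cons, Matrix.vecHead,
        Matrix.vecTail, Matrix.cons_val_two]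
    · -- n = 5
      have hB : delFirstLast (lapl 5 (linAdj 2)) = !![3,-1,-1; -1,4,-1; -1,-1,3] := by
        ext i j; fin_cases i <;> fin_cases j <;> decide
      have hA : delFirst (lapl 5 (linAdj 2)) = bandM 4 3 (-1) 4 3 2 := by
        ext i j; fin_cases i <;> fin_cases j <;> decide
      rw [hA, hB, detV1 4 le_rfl]
      rw [Matrix.det_fin_three]
      norm_num [show lucas 4 = 7 by norm_num [lucas], show Nat.fib 4 = 3 from rfl,
        show ff 4 = 21 by norm_num [ff, gp], Matrix.cons_val_zero, Matrix.cons_val_one,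
        Matrix.head_cons, Matrix.vecHead, Matrix.vecTail, Matrix.cons_val_two]
  · obtain ⟨t, rfl⟩ : ∃ t, n = t + 6 := ⟨n - 6, by omega⟩
    have hA : (delFirst (lapl (t+6) (linAdj 2))).det = ff (t+5) := by
      rw [delFirst_eq _ (by omega)]
      rw [show t+6-1 = t+5 from rfl, detV1 (t+5) (by omega)]
    have hB : (delFirstLast (lapl (t+6) (linAdj 2))).det = T2 (t+4) := by
      rw [delFirstLast_eq _ (by omega)]
      rw [show t+6-2 = t+4 from rfl, detV2 (t+4) (by omega)]
    rw [hA, hB, show t+6-1 = t+5 from rfl]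
    obtain ⟨e1, e2⟩ := bridge (t+5)
    have hF : (0:ℚ) < (Nat.fib (t+5) : ℚ) := by
      exact_mod_cast Nat.fib_pos.mpr (by omega)
    have hL := lucas_pos (t+5)
    have hid := identFL (t+5)
    unfold T2
    rw [show t+4+1 = t+5 from rfl, e1, e2]
    have hsg : sg (t+5) = (-1 : ℚ)^(t+5) := rfl
    rw [hsg]
    push_cast
    field_simp
    linear_combination 4 * hid
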